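/- In the Cantor system (X,f) of the construction, if x ≠ y are points of X with f^d(x) = y for some integer d ≠ 0, then limsup_{k→∞} d(f^k(x), f^k(y)) > 0. -/

import Mathlib

open Filter Topology
open scoped ENNReal

/-- `φ` is a graph homomorphism from `(V₁,E₁)` to `(V₂,E₂)`. -/
def IsGraphHom {V₁ V₂ : Type*} (E₁ : V₁ → V₁ → Prop) (E₂ : V₂ → V₂ → Prop)
    (φ : V₁ → V₂) : Prop :=
  ∀ u v, E₁ u v → E₂ (φ u) (φ v)

/-- `φ` is edge surjective. -/
def IsEdgeSurj {V₁ V₂ : Type*} (E₁ : V₁ → V₁ → Prop) (E₂ : V₂ → V₂ → Prop)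
    (φ : V₁ → V₂) : Prop :=
  ∀ u v, E₂ u v → ∃ u' v', E₁ u' v' ∧ φ u' = u ∧ φ v' = v

/-- `φ` is +directional. -/
def IsPlusDirectional {V₁ V₂ : Type*} (E₁ : V₁ → V₁ → Prop) (φ : V₁ → V₂) : Prop :=
  ∀ u v v', E₁ u v → E₁ u v' → φ v = φ v'

/-- `φ` is bidirectional. -/
def IsBidirectional {V₁ V₂ : Type*} (E₁ : V₁ → V₁ → Prop) (φ : V₁ → V₂) : Prop :=
  IsPlusDirectional E₁ φ ∧ ∀ u u' v, E₁ u v → E₁ u' v → φ u = φ u'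

/-- `φ` is a cover: a +directional edge-surjective graph homomorphism. -/
def IsCover {V₁ V₂ : Type*} (E₁ : V₁ → V₁ → Prop) (E₂ : V₂ → V₂ → Prop)
    (φ : V₁ → V₂) : Prop :=
  IsGraphHom E₁ E₂ φ ∧ IsPlusDirectional E₁ φ ∧ IsEdgeSurj E₁ E₂ φ

/-- every vertex has an incoming and an outgoing edge. -/
def IsSurjDigraph {V : Type*} (E : V → V → Prop) : Prop :=
  (∀ v, ∃ u, E u v) ∧ ∀ u, ∃ v, E u v

/-- the inverse limit `V_𝒢` of a sequence of graph maps. -/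
abbrev InvLim (V : ℕ → Type*) (φ : ∀ n, V (n + 1) → V n) : Type _ :=
  { x : ∀ n, V n // ∀ n, φ n (x (n + 1)) = x n }

/-- the relation `E_𝒢` on `V_𝒢`. -/
def ERel {V : ℕ → Type*} (E : ∀ n, V n → V n → Prop) (φ : ∀ n, V (n + 1) → V n)
    (x y : InvLim V φ) : Prop :=
  ∀ n, E n (x.1 n) (y.1 n)

/-- the product-of-discrete topology on the inverse limit, given explicitly. -/
def invLimTop (V : ℕ → Type*) (φ : ∀ n, V (n + 1) → V n) :
    TopologicalSpace (InvLim V φ) :=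
  @instTopologicalSpaceSubtype _ _ (@Pi.topologicalSpace ℕ V fun _ => ⊥)

/-- the distance function of an explicitly given metric space structure. -/
noncomputable def mdist {X : Type*} (m : MetricSpace X) (x y : X) : ℝ :=
  @dist X m.toDist x y

/-- the topology induced by an explicitly given metric space structure. -/
def mtop {X : Type*} (m : MetricSpace X) : TopologicalSpace X :=
  @UniformSpace.toTopologicalSpace X m.toUniformSpace

/-- the (half-open) list of vertices `vtx i 0, vtx i 1, …, vtx i (len-1)` of
the circuit `c_{n,i}`, the final vertex (equal to the initial one) omitted. -/
def circList {Vn : Type*} (vtx : ℕ → ℕ → Vn) (i len : ℕ) : List Vn :=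
  List.ofFn fun j : Fin len => vtx i (j : ℕ)

namespace Stmt16Aux

lemma circList_length {α : Type*} (vtx : ℕ → ℕ → α) (i L : ℕ) :
    (circList vtx i L).length = L := by simp [circList]

lemma circList_getD {α : Type*} (vtx : ℕ → ℕ → α) (i L j : ℕ) (h : j < L) (d : α) :
    (circList vtx i L).getD j d = vtx i j := by
  rw [List.getD_eq_getElem _ _ (by simpa [circList] using h)]
  simp [circList]

lemma getD_drop' {α : Type*} (l : List α) (D u : ℕ) (d : α) :
    (l.drop D).getD u d = l.getD (D + u) d := by
  simp [List.getD_eq_getElem?_getD, List.getElem?_drop]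

lemma dropFlat {α : Type*} (g : ℕ → List α) :
    ∀ (cnt s t : ℕ), t < ((List.range' s cnt).flatMap g).length →
    ∃ k D, s ≤ k ∧ k < s + cnt ∧ D ≤ t ∧ t - D < (g k).length ∧
      ((List.range' s cnt).flatMap g).drop D
        = g k ++ ((List.range' (k+1) (s + cnt - (k+1))).flatMap g) := by
  intro cnt
  induction cnt with
  | zero => intro s t ht; simp at ht
  | succ c ih =>
    intro s t ht
    rw [List.range'_succ, List.flatMap_cons] at ht ⊢
    by_cases h : t < (g s).length
    · refine ⟨s, 0, le_refl _, by omega, by omega, by simpa using h, ?_⟩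
      rw [List.drop_zero]
      have h1 : s + (c + 1) - (s + 1) = c := by omega
      rw [h1]
    · push_neg at h
      simp only [List.length_append] at ht
      obtain ⟨k, D, hk1, hk2, hD, hoff, hdrop⟩ := ih (s+1) (t - (g s).length) (by omega)
      refine ⟨k, (g s).length + D, by omega, by omega, by omega, ?_, ?_⟩
      · have h2 : t - ((g s).length + D) = t - (g s).length - D := by omega
        rw [h2]; exact hoff
      · rw [List.drop_length_add_append, hdrop]
        have h3 : s + 1 + c - (k + 1) = s + (c + 1) - (k + 1) := by omega
        rw [h3]

lemma dbl_getD_left {α : Type*} (vtx : ℕ → ℕ → α) (L i s : ℕ) (hs : s < L) (d : α) :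
    ((circList vtx i L ++ circList vtx i L)).getD s d = vtx i s := by
  rw [List.getD_append _ _ _ _ (by rw [circList_length]; exact hs), circList_getD _ _ _ _ hs]

lemma dbl_getD_right {α : Type*} (vtx : ℕ → ℕ → α) (L i s : ℕ) (hs : s < L) (d : α) :
    ((circList vtx i L ++ circList vtx i L)).getD (L + s) d = vtx i s := by
  rw [List.getD_append_right _ _ _ _ (by rw [circList_length]; omega)]
  rw [circList_length]
  have h : L + s - L = s := by omega
  rw [h, circList_getD _ _ _ _ hs]

lemma dbl_length {α : Type*} (vtx : ℕ → ℕ → α) (L i : ℕ) :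
    ((circList vtx i L ++ circList vtx i L)).length = L + L := by
  simp [circList_length]


section Main

variable {V : ℕ → Type}
  (E : ∀ n, V n → V n → Prop) (φ : ∀ n, V (n + 1) → V n)
  (len : ℕ → ℕ → ℕ) (v0 : ∀ n, V n) (vtx : ∀ n, ℕ → ℕ → V n)

/-- length of the pattern list -/
lemma patLen
    (hphiwalk : ∀ n i, 1 ≤ i → i ≤ n →
      List.map (φ n) (circList (vtx (n + 1)) i (len (n + 1) i)) =
        v0 n :: (((List.range' i (n + 1 - i)).flatMap fun k =>
          circList (vtx n) k (len n k) ++ circList (vtx n) k (len n k)) ++ [v0 n]))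
    (m i : ℕ) (h1 : 1 ≤ i) (h2 : i ≤ m) :
    ((List.range' i (m + 1 - i)).flatMap fun k =>
      circList (vtx m) k (len m k) ++ circList (vtx m) k (len m k)).length + 2
      = len (m+1) i := by
  have hw := hphiwalk m i h1 h2
  have := congrArg List.length hw
  rw [List.length_map, circList_length] at this
  simp only [List.length_cons, List.length_append, List.length_singleton, List.length_nil] at this
  omega

lemma patGet
    (hphiwalk : ∀ n i, 1 ≤ i → i ≤ n →
      List.map (φ n) (circList (vtx (n + 1)) i (len (n + 1) i)) =
        v0 n :: (((List.range' i (n + 1 - i)).flatMap fun k =>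
          circList (vtx n) k (len n k) ++ circList (vtx n) k (len n k)) ++ [v0 n]))
    (m i : ℕ) (h1 : 1 ≤ i) (h2 : i ≤ m) (j : ℕ) (hj : j < len (m+1) i) :
    φ m (vtx (m+1) i j)
      = (v0 m :: (((List.range' i (m + 1 - i)).flatMap fun k =>
          circList (vtx m) k (len m k) ++ circList (vtx m) k (len m k)) ++ [v0 m])).getD j (v0 m) := by
  have hw := hphiwalk m i h1 h2
  rw [← hw]
  rw [List.getD_eq_getElem _ _ (by simp [circList]; exact hj)]
  simp [circList]

lemma lenLB
    (hlen2 : ∀ n i, 1 ≤ i → i ≤ n → 2 ≤ len n i)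
    (hrec : ∀ n i, 1 ≤ i → i ≤ n →
      len (n + 1) i = 2 + 2 * ∑ j ∈ Finset.Icc i n, len n j)
    (m i : ℕ) (h1 : 1 ≤ i) (h2 : i ≤ m) :
    2 + 4 * (m + 1 - i) ≤ len (m+1) i := by
  rw [hrec m i h1 h2]
  have hsum : 2 * (m + 1 - i) ≤ ∑ j ∈ Finset.Icc i m, len m j := by
    calc 2 * (m + 1 - i) = ∑ _j ∈ Finset.Icc i m, 2 := by
          rw [Finset.sum_const, Nat.card_Icc, smul_eq_mul]; ring
      _ ≤ ∑ j ∈ Finset.Icc i m, len m j :=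
          Finset.sum_le_sum fun j hj =>
            hlen2 m j (le_trans h1 (Finset.mem_Icc.mp hj).1) (Finset.mem_Icc.mp hj).2
  omega

lemma lenSingle
    (hrec : ∀ n i, 1 ≤ i → i ≤ n →
      len (n + 1) i = 2 + 2 * ∑ j ∈ Finset.Icc i n, len n j)
    (m i i' : ℕ) (h1 : 1 ≤ i) (h2 : i ≤ i') (h3 : i' ≤ m) :
    2 + 2 * len m i' ≤ len (m+1) i := by
  rw [hrec m i h1 (le_trans h2 h3)]
  have : len m i' ≤ ∑ j ∈ Finset.Icc i m, len m j :=
    Finset.single_le_sum (fun j _ => Nat.zero_le _) (Finset.mem_Icc.mpr ⟨h2, h3⟩)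
  omega

lemma patMem
    (hends : ∀ n i, 1 ≤ i → i ≤ n → vtx n i 0 = v0 n ∧ vtx n i (len n i) = v0 n)
    (m i : ℕ) (h1 : 1 ≤ i) (h2 : i ≤ m) (u : V m)
    (hu : u ∈ (v0 m :: (((List.range' i (m + 1 - i)).flatMap fun k =>
          circList (vtx m) k (len m k) ++ circList (vtx m) k (len m k)) ++ [v0 m]))) :
    u = v0 m ∨ ∃ i' j', i ≤ i' ∧ i' ≤ m ∧ 0 < j' ∧ j' < len m i' ∧ u = vtx m i' j' := by
  rcases List.mem_cons.mp hu with h | h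
  · exact Or.inl h
  rcases List.mem_append.mp h with h | h
  · rcases List.mem_flatMap.mp h with ⟨k, hk, hmem⟩
    have hk' := List.mem_range'_1.mp hk
    have hmem' : u ∈ circList (vtx m) k (len m k) := by
      rcases List.mem_append.mp hmem with h' | h' <;> exact h'
    obtain ⟨⟨j', hj'⟩, hval⟩ := Set.mem_range.mp (List.mem_ofFn.mp (by
      simpa [circList] using hmem'))
    rcases Nat.eq_zero_or_pos j' with rfl | hj'0
    · left
      rw [← hval]
      exact (hends m k (by omega) (by omega)).1
    · right
      exact ⟨k, j', by omega, by omega, hj'0, hj', hval.symm⟩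
  · simp at h
    exact Or.inl h

lemma projv0
    (hV0 : ∀ u : V 0, u = v0 0)
    (hends : ∀ n i, 1 ≤ i → i ≤ n → vtx n i 0 = v0 n ∧ vtx n i (len n i) = v0 n)
    (hphi0 : ∀ n, φ n (v0 (n + 1)) = v0 n)
    (hphitop : ∀ n j, j ≤ len (n + 1) (n + 1) → φ n (vtx (n + 1) (n + 1) j) = v0 n)
    (hphiwalk : ∀ n i, 1 ≤ i → i ≤ n →
      List.map (φ n) (circList (vtx (n + 1)) i (len (n + 1) i)) =
        v0 n :: (((List.range' i (n + 1 - i)).flatMap fun k =>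
          circList (vtx n) k (len n k) ++ circList (vtx n) k (len n k)) ++ [v0 n]))
    (n : ℕ) : ∀ m, n ≤ m → ∀ z : InvLim V φ,
    (z.1 m = v0 m ∨ ∃ i j, n+1 ≤ i ∧ i ≤ m ∧ 0 < j ∧ j < len m i ∧ z.1 m = vtx m i j) →
    z.1 n = v0 n := by
  intro m
  induction m with
  | zero =>
    intro h0 z _
    have hn : n = 0 := by omega
    subst hn
    exact hV0 _
  | succ m ih =>
    intro hnm z hz
    rcases Nat.eq_or_lt_of_le hnm with heq | hlt
    · subst heq
      rcases hz with h | ⟨i, j, hi, him, _, _, _⟩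
      · exact h
      · omega
    · have hnm' : n ≤ m := by omega
      apply ih hnm' z
      have hcomp : z.1 m = φ m (z.1 (m+1)) := (z.2 m).symm
      rcases hz with h | ⟨i, j, hi, him, hj0, hjl, hval⟩
      · left; rw [hcomp, h, hphi0]
      · by_cases htop : i = m+1
        · left
          subst htop
          rw [hcomp, hval, hphitop m j (by omega)]
        · have him' : i ≤ m := by omega
          have h1i : 1 ≤ i := by omega
          have hg := patGet φ len v0 vtx hphiwalk m i h1i him' j hjl
          have hlenpat := patLen φ len v0 vtx hphiwalk m i h1i him'
          have hjlen : j < (v0 m :: (((List.range' i (m + 1 - i)).flatMap fun k =>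
              circList (vtx m) k (len m k) ++ circList (vtx m) k (len m k)) ++ [v0 m])).length := by
            simp only [List.length_cons, List.length_append, List.length_singleton]
            omega
          have hmem : (v0 m :: (((List.range' i (m + 1 - i)).flatMap fun k =>
              circList (vtx m) k (len m k) ++ circList (vtx m) k (len m k)) ++ [v0 m])).getD j (v0 m)
              ∈ (v0 m :: (((List.range' i (m + 1 - i)).flatMap fun k =>
              circList (vtx m) k (len m k) ++ circList (vtx m) k (len m k)) ++ [v0 m])) := by
            rw [List.getD_eq_getElem _ _ hjlen]
            exact List.getElem_mem _
          rcases patMem len v0 vtx hends m i h1i him' _ hmem with h' | ⟨i', j', hii', hi'm, hj'0, hj'l, hval'⟩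
          · left
            rw [hcomp, hval, hg, h']
          · right
            exact ⟨i', j', by omega, hi'm, hj'0, hj'l, by rw [hcomp, hval, hg, hval']⟩

lemma S1
    (hends : ∀ n i, 1 ≤ i → i ≤ n → vtx n i 0 = v0 n ∧ vtx n i (len n i) = v0 n)
    (hne : ∀ n i j, 1 ≤ i → i ≤ n → 0 < j → j < len n i → vtx n i j ≠ v0 n)
    (hinj : ∀ n i j i' j', 1 ≤ i → i ≤ n → 1 ≤ i' → i' ≤ n →
      0 < j → j < len n i → 0 < j' → j' < len n i' →
      vtx n i j = vtx n i' j' → i = i' ∧ j = j')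
    (hE : ∀ n, 1 ≤ n → ∀ u v : V n, E n u v ↔
      (u = v0 n ∧ v = v0 n) ∨
      ∃ i j, 1 ≤ i ∧ i ≤ n ∧ j < len n i ∧ u = vtx n i j ∧ v = vtx n i (j + 1))
    (M i j : ℕ) (h1 : 1 ≤ i) (h2 : i ≤ M) (hj0 : 0 < j) (hjl : j < len M i)
    (v : V M) (hEv : E M (vtx M i j) v) : v = vtx M i (j+1) := by
  have hM : 1 ≤ M := le_trans h1 h2
  rcases (hE M hM _ _).mp hEv with ⟨h, -⟩ | ⟨i', j', hi'1, hi'M, hj'l, hu, hv⟩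
  · exact absurd h (hne M i j h1 h2 hj0 hjl)
  · rcases Nat.eq_zero_or_pos j' with rfl | hj'0
    · rw [(hends M i' hi'1 hi'M).1] at hu
      exact absurd hu (hne M i j h1 h2 hj0 hjl)
    · obtain ⟨hie, hje⟩ := hinj M i j i' j' h1 h2 hi'1 hi'M hj0 hjl hj'0 hj'l hu
      rw [hv, ← hie, ← hje]

lemma S2
    (hends : ∀ n i, 1 ≤ i → i ≤ n → vtx n i 0 = v0 n ∧ vtx n i (len n i) = v0 n)
    (hne : ∀ n i j, 1 ≤ i → i ≤ n → 0 < j → j < len n i → vtx n i j ≠ v0 n)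
    (hinj : ∀ n i j i' j', 1 ≤ i → i ≤ n → 1 ≤ i' → i' ≤ n →
      0 < j → j < len n i → 0 < j' → j' < len n i' →
      vtx n i j = vtx n i' j' → i = i' ∧ j = j')
    (hE : ∀ n, 1 ≤ n → ∀ u v : V n, E n u v ↔
      (u = v0 n ∧ v = v0 n) ∨
      ∃ i j, 1 ≤ i ∧ i ≤ n ∧ j < len n i ∧ u = vtx n i j ∧ v = vtx n i (j + 1))
    (M i j : ℕ) (h1 : 1 ≤ i) (h2 : i ≤ M) (hj2 : 2 ≤ j) (hjl : j < len M i)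
    (w : V M) (hEv : E M w (vtx M i j)) : w = vtx M i (j-1) := by
  have hM : 1 ≤ M := le_trans h1 h2
  rcases (hE M hM _ _).mp hEv with ⟨-, h⟩ | ⟨i', j', hi'1, hi'M, hj'l, hu, hv⟩
  · exact absurd h (hne M i j h1 h2 (by omega) hjl)
  · by_cases hend : j' + 1 = len M i'
    · rw [hend, (hends M i' hi'1 hi'M).2] at hv
      exact absurd hv (hne M i j h1 h2 (by omega) hjl)
    · have hlt : j' + 1 < len M i' := lt_of_le_of_ne (by omega) hend
      obtain ⟨hie, hje⟩ := hinj M i j i' (j'+1) h1 h2 hi'1 hi'M (by omega) hjl (by omega) hlt hv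
      rw [hu, ← hie]
      congr 1
      omega

variable [∀ n, TopologicalSpace (V n)]

lemma orbE
    (f : InvLim V φ ≃ₜ InvLim V φ)
    (hf : ∀ x y : InvLim V φ, ERel E φ x y ↔ f x = y)
    (z : InvLim V φ) (k n : ℕ) :
    E n (((⇑f)^[k] z).1 n) (((⇑f)^[k+1] z).1 n) := by
  have h : f ((⇑f)^[k] z) = (⇑f)^[k+1] z := (Function.iterate_succ_apply' (⇑f) k z).symm
  exact ((hf _ _).mpr h) n

lemma fwd
    (hends : ∀ n i, 1 ≤ i → i ≤ n → vtx n i 0 = v0 n ∧ vtx n i (len n i) = v0 n)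
    (hne : ∀ n i j, 1 ≤ i → i ≤ n → 0 < j → j < len n i → vtx n i j ≠ v0 n)
    (hinj : ∀ n i j i' j', 1 ≤ i → i ≤ n → 1 ≤ i' → i' ≤ n →
      0 < j → j < len n i → 0 < j' → j' < len n i' →
      vtx n i j = vtx n i' j' → i = i' ∧ j = j')
    (hE : ∀ n, 1 ≤ n → ∀ u v : V n, E n u v ↔
      (u = v0 n ∧ v = v0 n) ∨
      ∃ i j, 1 ≤ i ∧ i ≤ n ∧ j < len n i ∧ u = vtx n i j ∧ v = vtx n i (j + 1))
    (f : InvLim V φ ≃ₜ InvLim V φ)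
    (hf : ∀ x y : InvLim V φ, ERel E φ x y ↔ f x = y)
    (z : InvLim V φ) (M i j : ℕ) (h1 : 1 ≤ i) (h2 : i ≤ M) (hj0 : 0 < j)
    (hz : z.1 M = vtx M i j) :
    ∀ s, j + s < len M i → ((⇑f)^[s] z).1 M = vtx M i (j+s) := by
  intro s
  induction s with
  | zero => intro _; simpa using hz
  | succ s ih =>
    intro hs
    have hps : j + s < len M i := by omega
    have h1s := ih hps
    have hE' := orbE E φ f hf z s M
    rw [h1s] at hE'
    exact S1 E len v0 vtx hends hne hinj hE M i (j+s) h1 h2 (by omega) hps _ hE'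

lemma bwd
    (hends : ∀ n i, 1 ≤ i → i ≤ n → vtx n i 0 = v0 n ∧ vtx n i (len n i) = v0 n)
    (hne : ∀ n i j, 1 ≤ i → i ≤ n → 0 < j → j < len n i → vtx n i j ≠ v0 n)
    (hinj : ∀ n i j i' j', 1 ≤ i → i ≤ n → 1 ≤ i' → i' ≤ n →
      0 < j → j < len n i → 0 < j' → j' < len n i' →
      vtx n i j = vtx n i' j' → i = i' ∧ j = j')
    (hE : ∀ n, 1 ≤ n → ∀ u v : V n, E n u v ↔
      (u = v0 n ∧ v = v0 n) ∨
      ∃ i j, 1 ≤ i ∧ i ≤ n ∧ j < len n i ∧ u = vtx n i j ∧ v = vtx n i (j + 1))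
    (f : InvLim V φ ≃ₜ InvLim V φ)
    (hf : ∀ x y : InvLim V φ, ERel E φ x y ↔ f x = y)
    (z : InvLim V φ) (M i j k : ℕ) (h1 : 1 ≤ i) (h2 : i ≤ M) (hj0 : 0 < j)
    (hjl : j < len M i) (hk : j ≤ k + 1)
    (hz : ((⇑f)^[k] z).1 M = vtx M i j) :
    ((⇑f)^[k - (j-1)] z).1 M = vtx M i 1 := by
  have H : ∀ t, t ≤ j - 1 → ((⇑f)^[k - t] z).1 M = vtx M i (j - t) := by
    intro t
    induction t with
    | zero => intro _; simpa using hz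
    | succ t ih =>
      intro ht
      have hprev := ih (by omega)
      have hjt : 2 ≤ j - t := by omega
      have hE' := orbE E φ f hf z (k - (t+1)) M
      have hstep : k - (t+1) + 1 = k - t := by omega
      rw [hstep, hprev] at hE'
      have := S2 E len v0 vtx hends hne hinj hE M i (j - t) h1 h2 hjt (by omega) _ hE'
      have hsub : j - (t+1) = j - t - 1 := by omega
      rw [hsub]
      exact this
  have h := H (j-1) le_rfl
  have hsub : j - (j-1) = 1 := by omega
  rw [hsub] at h
  exact h

lemma PB
    (hends : ∀ n i, 1 ≤ i → i ≤ n → vtx n i 0 = v0 n ∧ vtx n i (len n i) = v0 n)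
    (hne : ∀ n i j, 1 ≤ i → i ≤ n → 0 < j → j < len n i → vtx n i j ≠ v0 n)
    (hinj : ∀ n i j i' j', 1 ≤ i → i ≤ n → 1 ≤ i' → i' ≤ n →
      0 < j → j < len n i → 0 < j' → j' < len n i' →
      vtx n i j = vtx n i' j' → i = i' ∧ j = j')
    (hphiwalk : ∀ n i, 1 ≤ i → i ≤ n →
      List.map (φ n) (circList (vtx (n + 1)) i (len (n + 1) i)) =
        v0 n :: (((List.range' i (n + 1 - i)).flatMap fun k =>
          circList (vtx n) k (len n k) ++ circList (vtx n) k (len n k)) ++ [v0 n]))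
    (m I i₀ j₀ J : ℕ) (hI1 : 1 ≤ I) (hIm : I ≤ m) (hi₀1 : 1 ≤ i₀) (hi₀m : i₀ + 1 ≤ m)
    (hj₀0 : 0 < j₀) (hj₀l : j₀ < len m i₀) (hJ : J < len (m+1) I)
    (hval : φ m (vtx (m+1) I J) = vtx m i₀ j₀) :
    ∃ i', i₀ ≤ i' ∧ i' ≤ i₀ + 1 ∧
      J + (len m i₀ - j₀) + len m i' ≤ len (m+1) I ∧
      ∀ s, s < len m i' → φ m (vtx (m+1) I (J + (len m i₀ - j₀) + s)) = vtx m i' s := by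
  classical
  set g : ℕ → List (V m) := fun k =>
    circList (vtx m) k (len m k) ++ circList (vtx m) k (len m k) with hgdef
  set flat : List (V m) := (List.range' I (m + 1 - I)).flatMap g with hflatdef
  have hpatlen : flat.length + 2 = len (m+1) I :=
    patLen φ len v0 vtx hphiwalk m I hI1 hIm
  have hget : ∀ j, j < len (m+1) I →
      φ m (vtx (m+1) I j) = (v0 m :: (flat ++ [v0 m])).getD j (v0 m) := fun j hj =>
    patGet φ len v0 vtx hphiwalk m I hI1 hIm j hj
  have hglen : ∀ k, (g k).length = len m k + len m k := by
    intro k; rw [hgdef]; simp [circList_length]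
  have hne' : vtx m i₀ j₀ ≠ v0 m := hne m i₀ j₀ hi₀1 (by omega) hj₀0 hj₀l
  have hval' : (v0 m :: (flat ++ [v0 m])).getD J (v0 m) = vtx m i₀ j₀ := by
    rw [← hget J hJ]; exact hval
  have hJpos : 1 ≤ J := by
    by_contra h
    have hJ0 : J = 0 := by omega
    rw [hJ0] at hval'
    simp only [List.getD_cons_zero] at hval'
    exact hne' hval'.symm
  obtain ⟨t, rfl⟩ : ∃ t, J = t + 1 := ⟨J - 1, by omega⟩
  rw [List.getD_cons_succ] at hval'
  have htlt : t < flat.length := by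
    by_contra h
    push_neg at h
    rw [List.getD_append_right _ _ _ _ h] at hval'
    have hsing : ∀ u : ℕ, ([v0 m] : List (V m)).getD u (v0 m) = v0 m := by
      intro u
      cases u with
      | zero => simp
      | succ u => simp [List.getD_cons_succ]
    rw [hsing] at hval'
    exact hne' hval'.symm
  rw [List.getD_append _ _ _ _ htlt] at hval'
  obtain ⟨k, D, hkI, hkm, hDt, hoff, hdrop⟩ := dropFlat g (m + 1 - I) I t (by
    rw [← hflatdef]; exact htlt)
  rw [← hflatdef] at hdrop
  have hkm' : k ≤ m := by omega
  have hk1 : 1 ≤ k := by omega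
  set rest : List (V m) := (List.range' (k+1) (I + (m + 1 - I) - (k+1))).flatMap g with hrestdef
  have hlenflat : flat.length = D + (g k).length + rest.length := by
    have := congrArg List.length hdrop
    rw [List.length_drop, List.length_append] at this
    omega
  have hgetflat : ∀ u, flat.getD (D + u) (v0 m) = (g k ++ rest).getD u (v0 m) := by
    intro u
    rw [← getD_drop' flat D u (v0 m), hdrop]
  set off := t - D with hoffdef
  have hvk : (g k).getD off (v0 m) = vtx m i₀ j₀ := by
    have h1 : flat.getD t (v0 m) = (g k ++ rest).getD off (v0 m) := by
      rw [show t = D + off by omega]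
      exact hgetflat off
    rw [h1, List.getD_append _ _ _ _ (by omega)] at hval'
    exact hval'
  -- identify k = i₀ and whether first or second copy
  have hcopy : (off = j₀ ∧ i₀ = k) ∨ (off = len m i₀ + j₀ ∧ i₀ = k) := by
    have hglen' := hglen k
    by_cases hlt : off < len m k
    · have hv2 : vtx m k off = vtx m i₀ j₀ := by
        rw [hgdef] at hvk
        rw [← dbl_getD_left (vtx m) (len m k) k off hlt (v0 m)]
        exact hvk
      have hoff0 : 0 < off := by
        rcases Nat.eq_zero_or_pos off with h0 | h
        · rw [h0] at hv2
          rw [(hends m k hk1 hkm').1] at hv2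
          exact absurd hv2.symm hne'
        · exact h
      obtain ⟨hke, hoe⟩ := hinj m k off i₀ j₀ hk1 hkm' hi₀1 (by omega) hoff0 hlt hj₀0 hj₀l hv2
      exact Or.inl ⟨by omega, hke.symm⟩
    · push_neg at hlt
      have hlt2 : off - len m k < len m k := by omega
      have hv2 : vtx m k (off - len m k) = vtx m i₀ j₀ := by
        rw [hgdef] at hvk
        rw [← dbl_getD_right (vtx m) (len m k) k (off - len m k) hlt2 (v0 m)]
        rw [show len m k + (off - len m k) = off by omega]
        exact hvk
      have hoff0 : 0 < off - len m k := by
        rcases Nat.eq_zero_or_pos (off - len m k) with h0 | h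
        · rw [h0] at hv2
          rw [(hends m k hk1 hkm').1] at hv2
          exact absurd hv2.symm hne'
        · exact h
      obtain ⟨hke, hoe⟩ := hinj m k (off - len m k) i₀ j₀ hk1 hkm' hi₀1 (by omega) hoff0 hlt2 hj₀0 hj₀l hv2
      exact Or.inr ⟨by rw [← hke]; omega, hke.symm⟩
  rcases hcopy with ⟨hoffe, hke⟩ | ⟨hoffe, hke⟩
  · -- first copy: continue with second copy of c_{m,i₀}
    subst hke
    refine ⟨i₀, le_rfl, by omega, ?_, ?_⟩
    · have := hglen i₀
      omega
    · intro s hsl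
      have hidx : t + 1 + (len m i₀ - j₀) + s = (D + (len m i₀ + s)) + 1 := by omega
      have hidxlt : t + 1 + (len m i₀ - j₀) + s < len (m+1) I := by
        have := hglen i₀
        omega
      rw [hget _ hidxlt, hidx, List.getD_cons_succ,
        List.getD_append _ _ _ _ (by have := hglen i₀; omega : D + (len m i₀ + s) < flat.length),
        hgetflat, List.getD_append _ _ _ _ (by have := hglen i₀; omega : len m i₀ + s < (g i₀).length)]
      rw [hgdef]
      exact dbl_getD_right (vtx m) (len m i₀) i₀ s hsl (v0 m)
  · -- second copy: continue with first copy of c_{m,i₀+1}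
    subst hke
    have hcnt : I + (m + 1 - I) - (i₀ + 1) = (m - i₀ - 1) + 1 := by omega
    have hrest2 : rest = g (i₀ + 1) ++ (List.range' (i₀+2) (m - i₀ - 1)).flatMap g := by
      rw [hrestdef, hcnt, List.range'_succ, List.flatMap_cons]
    have hrestlen : (g (i₀ + 1)).length ≤ rest.length := by
      have h' : rest.length = (g (i₀+1)).length + ((List.range' (i₀+2) (m - i₀ - 1)).flatMap g).length := by
        rw [hrest2]; exact List.length_append
      omega
    refine ⟨i₀ + 1, by omega, le_rfl, ?_, ?_⟩
    · have h1 := hglen i₀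
      have h2 := hglen (i₀ + 1)
      omega
    · intro s hsl
      have h1 := hglen i₀
      have h2 := hglen (i₀ + 1)
      have hidx : t + 1 + (len m i₀ - j₀) + s = (D + (len m i₀ + len m i₀ + s)) + 1 := by omega
      have hidxlt : t + 1 + (len m i₀ - j₀) + s < len (m+1) I := by omega
      rw [hget _ hidxlt, hidx, List.getD_cons_succ,
        List.getD_append _ _ _ _ (by omega : D + (len m i₀ + len m i₀ + s) < flat.length),
        hgetflat,
        List.getD_append_right _ _ _ _ (by omega : (g i₀).length ≤ len m i₀ + len m i₀ + s),
        hrest2,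
        List.getD_append _ _ _ _ (by omega : len m i₀ + len m i₀ + s - (g i₀).length < (g (i₀+1)).length)]
      rw [show len m i₀ + len m i₀ + s - (g i₀).length = s by omega]
      rw [hgdef]
      exact dbl_getD_left (vtx m) (len m (i₀+1)) (i₀+1) s hsl (v0 m)

lemma Qlem
    (hne : ∀ n i j, 1 ≤ i → i ≤ n → 0 < j → j < len n i → vtx n i j ≠ v0 n)
    (hlen2 : ∀ n i, 1 ≤ i → i ≤ n → 2 ≤ len n i)
    (hrec : ∀ n i, 1 ≤ i → i ≤ n →
      len (n + 1) i = 2 + 2 * ∑ j ∈ Finset.Icc i n, len n j)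
    (hphiwalk : ∀ n i, 1 ≤ i → i ≤ n →
      List.map (φ n) (circList (vtx (n + 1)) i (len (n + 1) i)) =
        v0 n :: (((List.range' i (n + 1 - i)).flatMap fun k =>
          circList (vtx n) k (len n k) ++ circList (vtx n) k (len n k)) ++ [v0 n]))
    (n₁ : ℕ) (hn₁ : 1 ≤ n₁) : ∀ m, n₁ ≤ m → ∀ i', 1 ≤ i' → i' ≤ n₁ →
    ∃ s, 0 < s ∧ s < len m i' ∧
      ∀ z : InvLim V φ, z.1 m = vtx m i' s → z.1 n₁ ≠ v0 n₁ := by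
  intro m hm
  induction m, hm using Nat.le_induction with
  | base =>
    intro i' h1 h2
    refine ⟨1, one_pos, by have := hlen2 n₁ i' h1 h2; omega, ?_⟩
    intro z hz
    rw [hz]
    exact hne n₁ i' 1 h1 h2 one_pos (by have := hlen2 n₁ i' h1 h2; omega)
  | succ m hm ih =>
    intro i' h1 h2
    have h2m : i' ≤ m := le_trans h2 hm
    obtain ⟨s, hs0, hsl, hQ⟩ := ih i' h1 h2
    have hlup : 2 + 2 * len m i' ≤ len (m+1) i' := lenSingle len hrec m i' i' h1 le_rfl h2m
    refine ⟨s + 1, by omega, by omega, ?_⟩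
    intro z hz
    have hcomp : z.1 m = φ m (z.1 (m+1)) := (z.2 m).symm
    have hval : z.1 m = vtx m i' s := by
      rw [hcomp, hz, patGet φ len v0 vtx hphiwalk m i' h1 h2m (s+1) (by omega)]
      rw [List.getD_cons_succ]
      rw [show m + 1 - i' = (m - i') + 1 by omega, List.range'_succ, List.flatMap_cons]
      rw [List.getD_append _ _ _ _ (by
        simp only [List.length_append, circList_length]
        omega)]
      rw [List.getD_append _ _ _ _ (by
        simp only [List.length_append, circList_length]
        omega)]
      exact dbl_getD_left (vtx m) (len m i') i' s hsl (v0 m)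
    exact hQ z hval

variable [∀ n, TopologicalSpace (V n)]

lemma phaseI
    (hV0 : ∀ u : V 0, u = v0 0)
    (hends : ∀ n i, 1 ≤ i → i ≤ n → vtx n i 0 = v0 n ∧ vtx n i (len n i) = v0 n)
    (hlen2 : ∀ n i, 1 ≤ i → i ≤ n → 2 ≤ len n i)
    (hrec : ∀ n i, 1 ≤ i → i ≤ n →
      len (n + 1) i = 2 + 2 * ∑ j ∈ Finset.Icc i n, len n j)
    (hne : ∀ n i j, 1 ≤ i → i ≤ n → 0 < j → j < len n i → vtx n i j ≠ v0 n)
    (hinj : ∀ n i j i' j', 1 ≤ i → i ≤ n → 1 ≤ i' → i' ≤ n →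
      0 < j → j < len n i → 0 < j' → j' < len n i' →
      vtx n i j = vtx n i' j' → i = i' ∧ j = j')
    (hall : ∀ n, 1 ≤ n → ∀ u : V n,
      u = v0 n ∨ ∃ i j, 1 ≤ i ∧ i ≤ n ∧ 0 < j ∧ j < len n i ∧ u = vtx n i j)
    (hE : ∀ n, 1 ≤ n → ∀ u v : V n, E n u v ↔
      (u = v0 n ∧ v = v0 n) ∨
      ∃ i j, 1 ≤ i ∧ i ≤ n ∧ j < len n i ∧ u = vtx n i j ∧ v = vtx n i (j + 1))
    (hphi0 : ∀ n, φ n (v0 (n + 1)) = v0 n)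
    (hphitop : ∀ n j, j ≤ len (n + 1) (n + 1) → φ n (vtx (n + 1) (n + 1) j) = v0 n)
    (hphiwalk : ∀ n i, 1 ≤ i → i ≤ n →
      List.map (φ n) (circList (vtx (n + 1)) i (len (n + 1) i)) =
        v0 n :: (((List.range' i (n + 1 - i)).flatMap fun k =>
          circList (vtx n) k (len n k) ++ circList (vtx n) k (len n k)) ++ [v0 n]))
    (f : InvLim V φ ≃ₜ InvLim V φ)
    (hf : ∀ x y : InvLim V φ, ERel E φ x y ↔ f x = y)
    (a : InvLim V φ) (p : ℕ) (hp : 0 < p) (n : ℕ)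
    (H : ∀ᶠ k in Filter.atTop,
      ((⇑f)^[k] a).1 (n + p + 1) = ((⇑f)^[k+p] a).1 (n + p + 1)) :
    ∀ᶠ k in Filter.atTop, ((⇑f)^[k] a).1 n = v0 n := by
  set M := n + p + 1 with hMdef
  obtain ⟨K, hK⟩ := Filter.eventually_atTop.mp H
  set L := (Finset.Icc 1 M).sup (len M) with hLdef
  rw [Filter.eventually_atTop]
  refine ⟨K + L, fun k hk => ?_⟩
  have hM1 : 1 ≤ M := by omega
  have hWMk : ((⇑f)^[k] a).1 M = v0 M ∨
      ∃ i j, n+1 ≤ i ∧ i ≤ M ∧ 0 < j ∧ j < len M i ∧ ((⇑f)^[k] a).1 M = vtx M i j := by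
    rcases hall M hM1 (((⇑f)^[k] a).1 M) with h | ⟨i, j, hi1, hiM, hj0, hjl, hval⟩
    · exact Or.inl h
    · right
      refine ⟨i, j, ?_, hiM, hj0, hjl, hval⟩
      by_contra hile
      have hin : i ≤ n := by omega
      have hlb : 2 + 4 * (M - i) ≤ len M i := by
        have h' := lenLB len hlen2 hrec (M-1) i hi1 (by omega)
        have hM' : M - 1 + 1 = M := by omega
        rw [hM'] at h'
        exact h'
      have hpl : p + 1 < len M i := by omega
      have hLb : j ≤ L := le_trans (le_of_lt hjl)
        (Finset.le_sup (Finset.mem_Icc.mpr ⟨hi1, hiM⟩))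
      have hb := bwd E φ len v0 vtx hends hne hinj hE f hf a M i j k hi1 hiM hj0 hjl
        (by omega) hval
      set k1 := k - (j - 1) with hk1def
      have hk1K : K ≤ k1 := by omega
      have hper := hK k1 hk1K
      have hfwd := fwd E φ len v0 vtx hends hne hinj hE f hf ((⇑f)^[k1] a) M i 1 hi1 hiM
        one_pos hb p (by omega)
      rw [← Function.iterate_add_apply] at hfwd
      rw [show p + k1 = k1 + p by omega] at hfwd
      have hcontr : vtx M i (1+p) = vtx M i 1 := by
        rw [← hfwd, ← hper, hb]
      obtain ⟨-, h2⟩ := hinj M i (1+p) i 1 hi1 hiM hi1 hiM (by omega) (by omega)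
        one_pos (by omega) hcontr
      omega
  exact projv0 φ len v0 vtx hV0 hends hphi0 hphitop hphiwalk n M (by omega)
    ((⇑f)^[k] a) hWMk

lemma keylemma
    (hV0 : ∀ u : V 0, u = v0 0)
    (hE0 : ∀ u v : V 0, E 0 u v ↔ u = v0 0 ∧ v = v0 0)
    (hends : ∀ n i, 1 ≤ i → i ≤ n → vtx n i 0 = v0 n ∧ vtx n i (len n i) = v0 n)
    (hlen2 : ∀ n i, 1 ≤ i → i ≤ n → 2 ≤ len n i)
    (hrec : ∀ n i, 1 ≤ i → i ≤ n →
      len (n + 1) i = 2 + 2 * ∑ j ∈ Finset.Icc i n, len n j)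
    (hne : ∀ n i j, 1 ≤ i → i ≤ n → 0 < j → j < len n i → vtx n i j ≠ v0 n)
    (hinj : ∀ n i j i' j', 1 ≤ i → i ≤ n → 1 ≤ i' → i' ≤ n →
      0 < j → j < len n i → 0 < j' → j' < len n i' →
      vtx n i j = vtx n i' j' → i = i' ∧ j = j')
    (hall : ∀ n, 1 ≤ n → ∀ u : V n,
      u = v0 n ∨ ∃ i j, 1 ≤ i ∧ i ≤ n ∧ 0 < j ∧ j < len n i ∧ u = vtx n i j)
    (hE : ∀ n, 1 ≤ n → ∀ u v : V n, E n u v ↔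
      (u = v0 n ∧ v = v0 n) ∨
      ∃ i j, 1 ≤ i ∧ i ≤ n ∧ j < len n i ∧ u = vtx n i j ∧ v = vtx n i (j + 1))
    (hphi0 : ∀ n, φ n (v0 (n + 1)) = v0 n)
    (hphitop : ∀ n j, j ≤ len (n + 1) (n + 1) → φ n (vtx (n + 1) (n + 1) j) = v0 n)
    (hphiwalk : ∀ n i, 1 ≤ i → i ≤ n →
      List.map (φ n) (circList (vtx (n + 1)) i (len (n + 1) i)) =
        v0 n :: (((List.range' i (n + 1 - i)).flatMap fun k =>
          circList (vtx n) k (len n k) ++ circList (vtx n) k (len n k)) ++ [v0 n]))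
    (f : InvLim V φ ≃ₜ InvLim V φ)
    (hf : ∀ x y : InvLim V φ, ERel E φ x y ↔ f x = y)
    (a : InvLim V φ) (p : ℕ) (hp : 0 < p)
    (H : ∀ M, ∀ᶠ k in Filter.atTop, ((⇑f)^[k] a).1 M = ((⇑f)^[k+p] a).1 M) :
    (⇑f)^[p] a = a := by
  have Hv : ∀ n, ∀ᶠ k in Filter.atTop, ((⇑f)^[k] a).1 n = v0 n := fun n =>
    phaseI E φ len v0 vtx hV0 hends hlen2 hrec hne hinj hall hE hphi0 hphitop hphiwalk
      f hf a p hp n (H (n + p + 1))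
  have hfix : ∀ n, a.1 n = v0 n := by
    by_contra hcon
    push_neg at hcon
    obtain ⟨n₀, hn₀⟩ := hcon
    have hn₀1 : 1 ≤ n₀ := by
      by_contra hcc
      have h0 : n₀ = 0 := by omega
      subst h0
      exact hn₀ (hV0 _)
    have C1 : ∀ m, n₀ ≤ m →
        ∃ i j, 1 ≤ i ∧ i ≤ n₀ ∧ 0 < j ∧ j < len m i ∧ a.1 m = vtx m i j := by
      intro m hm
      rcases hall m (by omega) (a.1 m) with h | ⟨i, j, h1, h2, h3, h4, h5⟩
      · exact absurd (projv0 φ len v0 vtx hV0 hends hphi0 hphitop hphiwalk n₀ m hm a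
          (Or.inl h)) hn₀
      · by_cases hle : i ≤ n₀
        · exact ⟨i, j, h1, hle, h3, h4, h5⟩
        · exact absurd (projv0 φ len v0 vtx hV0 hends hphi0 hphitop hphiwalk n₀ m hm a
            (Or.inr ⟨i, j, by omega, h2, h3, h4, h5⟩)) hn₀
    have C3 : ∀ m, n₀ + 1 ≤ m →
        ∃ i j, 1 ≤ i ∧ i ≤ n₀ ∧ 0 < j ∧ j < len m i ∧ a.1 m = vtx m i j ∧
          j + (m - n₀) ≤ len m i := by
      intro m hm
      induction m, hm using Nat.le_induction with
      | base =>
        obtain ⟨i, j, h1, h2, h3, h4, h5⟩ := C1 (n₀+1) (by omega)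
        exact ⟨i, j, h1, h2, h3, h4, h5, by omega⟩
      | succ m hm ih =>
        obtain ⟨i, j, h1, h2, h3, h4, h5, h6⟩ := ih
        obtain ⟨I, J, hI1, hIn, hJ0, hJl, hvJ⟩ := C1 (m+1) (by omega)
        have hval : φ m (vtx (m+1) I J) = vtx m i j := by
          rw [← hvJ, a.2 m, h5]
        obtain ⟨i', hii', hi'le, hbound, hvals⟩ :=
          PB φ len v0 vtx hends hne hinj hphiwalk m I i j J hI1 (by omega) h1 (by omega)
            h3 h4 hJl hval
        have hl2 : 2 ≤ len m i' := hlen2 m i' (by omega) (by omega)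
        exact ⟨I, J, hI1, hIn, hJ0, hJl, hvJ, by omega⟩
    obtain ⟨T, hT⟩ := Filter.eventually_atTop.mp (Hv (n₀+1))
    set m := n₀ + 1 + T with hmdef
    obtain ⟨i, j, h1, h2, h3, h4, h5, h6⟩ := C3 m (by omega)
    obtain ⟨I, J, hI1, hIn, hJ0, hJl, hvJ⟩ := C1 (m+1) (by omega)
    have hval : φ m (vtx (m+1) I J) = vtx m i j := by
      rw [← hvJ, a.2 m, h5]
    obtain ⟨i', hii', hi'le, hbound, hvals⟩ :=
      PB φ len v0 vtx hends hne hinj hphiwalk m I i j J hI1 (by omega) h1 (by omega)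
        h3 h4 hJl hval
    obtain ⟨s, hs0, hsl, hQ⟩ := Qlem φ len v0 vtx hne hlen2 hrec hphiwalk (n₀+1)
      (by omega) m (by omega) i' (by omega) (by omega)
    set k := (len m i - j) + s with hkdef
    have hfwd := fwd E φ len v0 vtx hends hne hinj hE f hf a (m+1) I J hI1 (by omega)
      hJ0 hvJ k (by omega)
    have hWm : ((⇑f)^[k] a).1 m = vtx m i' s := by
      have hc := (((⇑f)^[k] a).2 m)
      rw [← hc, hfwd]
      rw [show J + k = J + (len m i - j) + s by omega]
      exact hvals s hsl
    have hknv := hQ ((⇑f)^[k] a) hWm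
    exact hknv (hT k (by omega))
  have hfa : f a = a := by
    apply (hf a a).mp
    intro n
    rw [hfix n]
    cases n with
    | zero => exact (hE0 _ _).mpr ⟨rfl, rfl⟩
    | succ n' => exact (hE (n'+1) (by omega) _ _).mpr (Or.inl ⟨rfl, rfl⟩)
  exact Function.iterate_fixed hfa p

end Main
end Stmt16Aux

namespace Stmt16Aux

lemma permPow {X : Type*} [TopologicalSpace X] (f : X ≃ₜ X) :
    ∀ (p : ℕ) (z : X), ((f.toEquiv : Equiv.Perm X) ^ p) z = (⇑f)^[p] z := by
  intro p
  induction p with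
  | zero => intro z; simp
  | succ p ih =>
    intro z
    rw [pow_succ, Equiv.Perm.mul_apply, Function.iterate_succ_apply]
    have : f.toEquiv z = f z := rfl
    rw [this]
    exact ih (f z)

end Stmt16Aux


theorem stmt16
    (V : ℕ → Type) [∀ n, TopologicalSpace (V n)] [∀ n, DiscreteTopology (V n)]
    [∀ n, Fintype (V n)]
    (E : ∀ n, V n → V n → Prop) (φ : ∀ n, V (n + 1) → V n)
    (len : ℕ → ℕ → ℕ) (v0 : ∀ n, V n) (vtx : ∀ n, ℕ → ℕ → V n)
    (hV0 : ∀ u : V 0, u = v0 0)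
    (hE0 : ∀ u v : V 0, E 0 u v ↔ u = v0 0 ∧ v = v0 0)
    (hends : ∀ n i, 1 ≤ i → i ≤ n → vtx n i 0 = v0 n ∧ vtx n i (len n i) = v0 n)
    (hlen2 : ∀ n i, 1 ≤ i → i ≤ n → 2 ≤ len n i)
    (hrec : ∀ n i, 1 ≤ i → i ≤ n →
      len (n + 1) i = 2 + 2 * ∑ j ∈ Finset.Icc i n, len n j)
    (hne : ∀ n i j, 1 ≤ i → i ≤ n → 0 < j → j < len n i → vtx n i j ≠ v0 n)
    (hinj : ∀ n i j i' j', 1 ≤ i → i ≤ n → 1 ≤ i' → i' ≤ n →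
      0 < j → j < len n i → 0 < j' → j' < len n i' →
      vtx n i j = vtx n i' j' → i = i' ∧ j = j')
    (hall : ∀ n, 1 ≤ n → ∀ u : V n,
      u = v0 n ∨ ∃ i j, 1 ≤ i ∧ i ≤ n ∧ 0 < j ∧ j < len n i ∧ u = vtx n i j)
    (hE : ∀ n, 1 ≤ n → ∀ u v : V n, E n u v ↔
      (u = v0 n ∧ v = v0 n) ∨
      ∃ i j, 1 ≤ i ∧ i ≤ n ∧ j < len n i ∧ u = vtx n i j ∧ v = vtx n i (j + 1))
    (hphi0 : ∀ n, φ n (v0 (n + 1)) = v0 n)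
    (hphitop : ∀ n j, j ≤ len (n + 1) (n + 1) → φ n (vtx (n + 1) (n + 1) j) = v0 n)
    (hphiwalk : ∀ n i, 1 ≤ i → i ≤ n →
      List.map (φ n) (circList (vtx (n + 1)) i (len (n + 1) i)) =
        v0 n :: (((List.range' i (n + 1 - i)).flatMap fun k =>
          circList (vtx n) k (len n k) ++ circList (vtx n) k (len n k)) ++ [v0 n]))
    (hcov : ∀ n, IsCover (E (n + 1)) (E n) (φ n))
    (f : InvLim V φ ≃ₜ InvLim V φ)
    (hf : ∀ x y : InvLim V φ, ERel E φ x y ↔ f x = y)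
    (m : MetricSpace (InvLim V φ))
    (hm : mtop m = (inferInstance : TopologicalSpace (InvLim V φ))) :
    ∀ x y : InvLim V φ, x ≠ y → ∀ d : ℤ, d ≠ 0 →
      ((f.toEquiv : Equiv.Perm (InvLim V φ)) ^ d) x = y →
      0 < Filter.limsup (fun k => mdist m ((⇑f)^[k] x) ((⇑f)^[k] y)) Filter.atTop := by
  intro x y hxy d hd horb
  -- Step 1: some coordinate differs along the orbit frequently
  have hdiff : ∃ n, ∃ᶠ k in Filter.atTop, ((⇑f)^[k] x).1 n ≠ ((⇑f)^[k] y).1 n := by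
    by_contra hcon
    push_neg at hcon
    have hev : ∀ n, ∀ᶠ k in Filter.atTop, ((⇑f)^[k] x).1 n = ((⇑f)^[k] y).1 n := by
      intro n
      have h1 := hcon n
      simpa using h1
    rcases lt_or_gt_of_ne hd with hneg | hpos
    · -- d < 0 : x = f^[p] y
      set p := (-d).toNat with hpdef
      have hp0 : 0 < p := by omega
      have hpz : ((f.toEquiv : Equiv.Perm (InvLim V φ)) ^ (-d)) y = x := by
        rw [← horb, ← Equiv.Perm.mul_apply, ← zpow_add, neg_add_cancel, zpow_zero,
          Equiv.Perm.coe_one, id_eq]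
      have hcast : (-d) = (p : ℤ) := by omega
      rw [hcast, zpow_natCast] at hpz
      rw [Stmt16Aux.permPow f p y] at hpz
      have H : ∀ M, ∀ᶠ k in Filter.atTop, ((⇑f)^[k] y).1 M = ((⇑f)^[k+p] y).1 M := by
        intro M
        filter_upwards [hev M] with k hk
        rw [Function.iterate_add_apply, hpz]
        exact hk.symm
      have hkey := Stmt16Aux.keylemma E φ len v0 vtx hV0 hE0 hends hlen2 hrec hne hinj
        hall hE hphi0 hphitop hphiwalk f hf y p hp0 H
      exact hxy (by rw [← hpz, hkey])
    · -- d > 0 : y = f^[p] x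
      set p := d.toNat with hpdef
      have hp0 : 0 < p := by omega
      have hpz : ((f.toEquiv : Equiv.Perm (InvLim V φ)) ^ (p : ℤ)) x = y := by
        rw [show (p : ℤ) = d by omega]
        exact horb
      rw [zpow_natCast] at hpz
      rw [Stmt16Aux.permPow f p x] at hpz
      have H : ∀ M, ∀ᶠ k in Filter.atTop, ((⇑f)^[k] x).1 M = ((⇑f)^[k+p] x).1 M := by
        intro M
        filter_upwards [hev M] with k hk
        rw [Function.iterate_add_apply, hpz]
        exact hk
      have hkey := Stmt16Aux.keylemma E φ len v0 vtx hV0 hE0 hends hlen2 hrec hne hinj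
        hall hE hphi0 hphitop hphiwalk f hf x p hp0 H
      exact hxy (by rw [← hkey, hpz])
  obtain ⟨n, hfreq⟩ := hdiff
  -- Step 2: compactness
  haveI : ∀ k, CompactSpace (V k) := fun k => Finite.compactSpace
  have hclosed : IsClosed {z : ∀ k, V k | ∀ k, φ k (z (k+1)) = z k} := by
    have hrw : {z : ∀ k, V k | ∀ k, φ k (z (k+1)) = z k}
        = ⋂ k, {z : ∀ k, V k | φ k (z (k+1)) = z k} := by
      ext z; simp [Set.mem_iInter]
    rw [hrw]
    exact isClosed_iInter fun k => isClosed_eq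
      ((continuous_of_discreteTopology).comp (continuous_apply (k+1)))
      (continuous_apply k)
  haveI hcs : CompactSpace (InvLim V φ) := isCompact_iff_compactSpace.mp hclosed.isCompact
  -- Step 3: the distance function is continuous for the ambient topology
  have hdc : Continuous fun q : InvLim V φ × InvLim V φ => mdist m q.1 q.2 := by
    have h := @continuous_dist (InvLim V φ) m.toPseudoMetricSpace
    have h2 : @Continuous _ _ (@instTopologicalSpaceProd _ _ (mtop m) (mtop m)) _
        (fun q : InvLim V φ × InvLim V φ => mdist m q.1 q.2) := h
    rw [hm] at h2
    exact h2
  -- Step 4: the set of pairs differing at coordinate n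
  have hSclosed : IsClosed {q : InvLim V φ × InvLim V φ | q.1.1 n ≠ q.2.1 n} := by
    have hrw : {q : InvLim V φ × InvLim V φ | q.1.1 n ≠ q.2.1 n}
        = (fun q : InvLim V φ × InvLim V φ => (q.1.1 n, q.2.1 n)) ⁻¹'
            {p : V n × V n | p.1 ≠ p.2} := rfl
    rw [hrw]
    apply IsClosed.preimage
    · exact Continuous.prodMk
        (((continuous_apply n).comp continuous_subtype_val).comp continuous_fst)
        (((continuous_apply n).comp continuous_subtype_val).comp continuous_snd)
    · exact isClosed_discrete _
  obtain ⟨k₀, hk₀⟩ := hfreq.exists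
  have hSne : Set.Nonempty {q : InvLim V φ × InvLim V φ | q.1.1 n ≠ q.2.1 n} :=
    ⟨((⇑f)^[k₀] x, (⇑f)^[k₀] y), hk₀⟩
  obtain ⟨q₀, hq₀S, hq₀min⟩ := hSclosed.isCompact.exists_isMinOn hSne hdc.continuousOn
  have hεpos : 0 < mdist m q₀.1 q₀.2 := by
    have hqne : q₀.1 ≠ q₀.2 := by
      intro h
      exact hq₀S (by rw [h])
    exact (@dist_pos _ m _ _).mpr hqne
  -- Step 5: boundedness
  obtain ⟨qM, -, hqM⟩ := isCompact_univ.exists_isMaxOn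
    ⟨(x, x), Set.mem_univ _⟩ hdc.continuousOn
  have hbdd : Filter.IsBoundedUnder (· ≤ ·) Filter.atTop
      (fun k => mdist m ((⇑f)^[k] x) ((⇑f)^[k] y)) :=
    Filter.isBoundedUnder_of ⟨mdist m qM.1 qM.2,
      fun k => by exact hqM (Set.mem_univ (((⇑f)^[k] x), ((⇑f)^[k] y)))⟩
  have hfreq' : ∃ᶠ k in Filter.atTop,
      mdist m q₀.1 q₀.2 ≤ mdist m ((⇑f)^[k] x) ((⇑f)^[k] y) :=
    hfreq.mono fun k hk => by
      exact hq₀min (Set.mem_setOf_eq ▸ hk :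
        ((⇑f)^[k] x, (⇑f)^[k] y) ∈ {q : InvLim V φ × InvLim V φ | q.1.1 n ≠ q.2.1 n})
  calc (0:ℝ) < mdist m q₀.1 q₀.2 := hεpos
    _ ≤ _ := Filter.le_limsup_of_frequently_le hfreq' hbdd
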